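/- With the notation of the entropy decomposition and N_{x,j} ~ Bin(N_j, p(x)), H(p) − E[Ĥ*] ≤ Σ_{j=1}^T Σ_{x∈[k]} p_A(I_j|x)/N_j, where E[Ĥ*] = Σ_j p_A(I_j)·Σ_x p_A(x|I_j)·E[log(N_j/(N_{x,j}+1))]. -/

import Mathlib

open Finset

/-- pmf of Bin(m,r) at i -/
noncomputable def binomPMF (m : ℕ) (r : ℝ) (i : ℕ) : ℝ :=
  (m.choose i : ℝ) * r ^ i * (1 - r) ^ (m - i)

/-- expectation of f(X) for X ~ Bin(m,r) -/
noncomputable def binomExp (m : ℕ) (r : ℝ) (f : ℕ → ℝ) : ℝ :=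
  ∑ i ∈ Finset.range (m + 1), binomPMF m r i * f i

lemma binomPMF_nonneg {m : ℕ} {r : ℝ} (h0 : 0 ≤ r) (h1 : r ≤ 1) (i : ℕ) :
    0 ≤ binomPMF m r i := by
  unfold binomPMF
  have : (0:ℝ) ≤ 1 - r := by linarith
  positivity

lemma sum_binomPMF (m : ℕ) (r : ℝ) : ∑ i ∈ range (m+1), binomPMF m r i = 1 := by
  calc ∑ i ∈ range (m+1), binomPMF m r i
      = ∑ i ∈ range (m+1), r ^ i * (1-r) ^ (m-i) * (m.choose i : ℝ) := by
        apply Finset.sum_congr rfl; intro i _; unfold binomPMF; ring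
    _ = (r + (1-r))^m := (add_pow r (1-r) m).symm
    _ = 1 := by norm_num

lemma binom_mean (m : ℕ) (r : ℝ) :
    ∑ i ∈ range (m+1), binomPMF m r i * i = m * r := by
  induction m with
  | zero => simp [binomPMF]
  | succ n _ =>
    rw [Finset.sum_range_succ']
    have h0 : binomPMF (n+1) r 0 * ((0:ℕ):ℝ) = 0 := by simp
    rw [h0, add_zero]
    have hterm : ∀ i ∈ range (n+1),
        binomPMF (n+1) r (i+1) * (((i+1 : ℕ)):ℝ) = ((n:ℝ)+1) * r * binomPMF n r i := by
      intro i hi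
      unfold binomPMF
      have hc : ((n+1).choose (i+1) : ℝ) * ((i:ℝ)+1) = ((n:ℝ)+1) * (n.choose i : ℝ) := by
        exact_mod_cast (Nat.add_one_mul_choose_eq n i).symm
      have hmi : n + 1 - (i + 1) = n - i := by omega
      rw [hmi]
      push_cast
      linear_combination (r^(i+1) * (1-r)^(n-i)) * hc
    rw [Finset.sum_congr rfl hterm, ← Finset.mul_sum, sum_binomPMF]
    push_cast
    ring

lemma binom_mean_succ (m : ℕ) (r : ℝ) :
    ∑ i ∈ range (m+1), binomPMF m r i * ((i:ℝ)+1) = m * r + 1 := by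
  have h1 := binom_mean m r
  have h2 := sum_binomPMF m r
  calc ∑ i ∈ range (m+1), binomPMF m r i * ((i:ℝ)+1)
      = ∑ i ∈ range (m+1), (binomPMF m r i * i + binomPMF m r i) := by
        apply Finset.sum_congr rfl; intros; ring
    _ = m * r + 1 := by rw [Finset.sum_add_distrib, h1, h2]

lemma key_bound (m : ℕ) (hm : 0 < m) (r : ℝ) (hr : 0 < r) (hr1 : r ≤ 1) :
    -Real.log r - binomExp m r (fun i => Real.log ((m:ℝ) / ((i:ℝ)+1))) ≤ 1/(m*r) := by
  have hm' : (0:ℝ) < m := by exact_mod_cast hm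
  have hmr : (0:ℝ) < (m:ℝ) * r := by positivity
  have hw0 : ∀ i ∈ range (m+1), 0 ≤ binomPMF m r i := fun i _ => binomPMF_nonneg hr.le hr1 i
  have hw1 : ∑ i ∈ range (m+1), binomPMF m r i = 1 := sum_binomPMF m r
  have hmem : ∀ i ∈ range (m+1), (((i:ℝ)+1)/((m:ℝ)*r)) ∈ Set.Ioi (0:ℝ) := by
    intro i _
    have h1 : (0:ℝ) < (i:ℝ)+1 := by positivity
    exact Set.mem_Ioi.2 (by positivity)
  have jensen := (strictConcaveOn_log_Ioi.concaveOn).le_map_sum hw0 hw1 hmem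
  simp only [smul_eq_mul] at jensen
  -- rewrite the mean
  have hsum : ∑ i ∈ range (m+1), binomPMF m r i * (((i:ℝ)+1)/((m:ℝ)*r)) = 1 + 1/((m:ℝ)*r) := by
    have : ∀ i ∈ range (m+1), binomPMF m r i * (((i:ℝ)+1)/((m:ℝ)*r))
        = binomPMF m r i * ((i:ℝ)+1) * (1/((m:ℝ)*r)) := by intros; ring
    rw [Finset.sum_congr rfl this, ← Finset.sum_mul, binom_mean_succ]
    field_simp
  rw [hsum] at jensen
  -- rewrite LHS as the Jensen sum
  have hlhs : -Real.log r - binomExp m r (fun i => Real.log ((m:ℝ) / ((i:ℝ)+1)))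
      = ∑ i ∈ range (m+1), binomPMF m r i * Real.log (((i:ℝ)+1)/((m:ℝ)*r)) := by
    unfold binomExp
    have e1 : ∀ i ∈ range (m+1), binomPMF m r i * Real.log (((i:ℝ)+1)/((m:ℝ)*r))
        = binomPMF m r i * Real.log ((i:ℝ)+1) - binomPMF m r i * (Real.log m + Real.log r) := by
      intro i _
      have h1 : ((i:ℝ)+1) ≠ 0 := by positivity
      rw [Real.log_div h1 hmr.ne', Real.log_mul hm'.ne' hr.ne']
      ring
    have e2 : ∀ i ∈ range (m+1), binomPMF m r i * Real.log ((m:ℝ) / ((i:ℝ)+1))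
        = binomPMF m r i * Real.log m - binomPMF m r i * Real.log ((i:ℝ)+1) := by
      intro i _
      have h1 : ((i:ℝ)+1) ≠ 0 := by positivity
      rw [Real.log_div hm'.ne' h1]
      ring
    rw [Finset.sum_congr rfl e1, Finset.sum_congr rfl e2]
    rw [Finset.sum_sub_distrib, Finset.sum_sub_distrib, ← Finset.sum_mul, ← Finset.sum_mul, hw1]
    ring
  rw [hlhs]
  have hfin : Real.log (1 + 1/((m:ℝ)*r)) ≤ 1/((m:ℝ)*r) := by
    have hpos : (0:ℝ) < 1 + 1/((m:ℝ)*r) := by positivity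
    have := Real.log_le_sub_one_of_pos hpos
    linarith
  exact jensen.trans hfin

/-- The bias of the unclipped interval-based estimator:
`H(p) − E[Ĥ*] ≤ ∑ j ∑ x p_A(I_j | x) / N_j`. -/
theorem unclipped_bias_upper (k T : ℕ) (p : Fin k → ℝ)
    (hpos : ∀ x, 0 < p x) (hsum : ∑ x, p x = 1)
    (A : Fin k → Fin T → ℝ) (hA0 : ∀ x j, 0 ≤ A x j) (hA1 : ∀ x, ∑ j, A x j = 1)
    (N : Fin T → ℕ) (hN : ∀ j, 0 < N j) :
    (-∑ x, p x * Real.log (p x)) -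
      (∑ j, (∑ x, p x * A x j) *
        (∑ x, (p x * A x j / (∑ y, p y * A y j)) *
          binomExp (N j) (p x) (fun i => Real.log ((N j : ℝ) / ((i : ℝ) + 1))))) ≤
    ∑ j, ∑ x, A x j / (N j : ℝ) := by
  have hp1 : ∀ x, p x ≤ 1 := fun x =>
    hsum ▸ Finset.single_le_sum (fun i _ => (hpos i).le) (mem_univ x)
  -- abbreviation for the expectation
  set E : Fin T → Fin k → ℝ := fun j x =>
    binomExp (N j) (p x) (fun i => Real.log ((N j : ℝ) / ((i : ℝ) + 1))) with hE
  -- Step A: the normalized inner sum equals the unnormalized one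
  have stepA : ∀ j, (∑ x, p x * A x j) * (∑ x, (p x * A x j / (∑ y, p y * A y j)) * E j x)
      = ∑ x, p x * A x j * E j x := by
    intro j
    by_cases hS : (∑ y, p y * A y j) = 0
    · have hz : ∀ x, p x * A x j = 0 := by
        intro x
        exact (Finset.sum_eq_zero_iff_of_nonneg
          (fun y _ => mul_nonneg (hpos y).le (hA0 y j))).mp hS x (mem_univ x)
      rw [show (∑ x, p x * A x j) = 0 from hS, zero_mul]
      exact (Finset.sum_eq_zero fun x _ => by rw [hz x, zero_mul]).symm
    · rw [Finset.mul_sum]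
      apply Finset.sum_congr rfl
      intro x _
      field_simp
  -- rewrite H(p)
  have hH : (-∑ x, p x * Real.log (p x)) = ∑ j, ∑ x, p x * A x j * (-(Real.log (p x))) := by
    rw [Finset.sum_comm]
    rw [← Finset.sum_neg_distrib]
    apply Finset.sum_congr rfl
    intro x _
    have : ∀ j ∈ (univ : Finset (Fin T)), p x * A x j * (-(Real.log (p x)))
        = (p x * (-(Real.log (p x)))) * A x j := fun j _ => by ring
    rw [Finset.sum_congr rfl this, ← Finset.mul_sum, hA1 x]
    ring
  have hrw : (-∑ x, p x * Real.log (p x)) -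
      (∑ j, (∑ x, p x * A x j) * (∑ x, (p x * A x j / (∑ y, p y * A y j)) * E j x))
      = ∑ j, ∑ x, p x * A x j * (-(Real.log (p x)) - E j x) := by
    rw [hH, Finset.sum_congr rfl (fun j _ => stepA j), ← Finset.sum_sub_distrib]
    apply Finset.sum_congr rfl
    intro j _
    rw [← Finset.sum_sub_distrib]
    apply Finset.sum_congr rfl
    intro x _
    ring
  rw [hrw]
  apply Finset.sum_le_sum
  intro j _
  apply Finset.sum_le_sum
  intro x _
  have hNj : (0:ℝ) < (N j : ℝ) := by exact_mod_cast hN j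
  have hk := key_bound (N j) (hN j) (p x) (hpos x) (hp1 x)
  have hnn : 0 ≤ p x * A x j := mul_nonneg (hpos x).le (hA0 x j)
  calc p x * A x j * (-(Real.log (p x)) - E j x)
      ≤ p x * A x j * (1/((N j : ℝ) * p x)) := mul_le_mul_of_nonneg_left hk hnn
    _ = A x j / (N j : ℝ) := by
        have h1 : p x ≠ 0 := (hpos x).ne'
        have h2 : (N j:ℝ) ≠ 0 := hNj.ne'
        field_simp
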